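/- Composition of zCDP mechanisms adds their ρ parameters pointwise: if M₁ satisfies ρ⃗₁-zCDP, and for every output y of M₁ the mechanism M₂(·, y) satisfies ρ⃗₂-zCDP, then the adaptively composed mechanism M(x) = (Y₁, Y₂) with Y₁ ∼ M₁(x) and Y₂ ∼ M₂(x, Y₁) satisfies ρ⃗-zCDP with ρ⃗(i) = ρ⃗₁(i) + ρ⃗₂(i) for every coordinate i. -/
import Mathlib


open Finset

/-- Adaptive composition of zCDP mechanisms adds their `ρ` parameters pointwise:
if `M₁` satisfies `ρ⃗₁`-zCDP and `M₂ (·, y)` satisfies `ρ⃗₂`-zCDP for every `y`,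
then the composed mechanism `x ↦ (Y₁, Y₂)` with `Y₁ ∼ M₁ x`, `Y₂ ∼ M₂ x Y₁`
satisfies `(ρ⃗₁ + ρ⃗₂)`-zCDP (in terms of the moment generating function of the
privacy loss). -/
theorem stmt7 {X Y₁ Y₂ : Type*} [Fintype Y₁] [Fintype Y₂] {n : ℕ}
    (M₁ : (Fin n → X) → Y₁ → ℝ) (M₂ : (Fin n → X) → Y₁ → Y₂ → ℝ)
    (hM₁pos : ∀ x y, 0 < M₁ x y) (hM₁1 : ∀ x, ∑ y, M₁ x y = 1)
    (hM₂pos : ∀ x y₁ y₂, 0 < M₂ x y₁ y₂) (hM₂1 : ∀ x y₁, ∑ y₂, M₂ x y₁ y₂ = 1)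
    (ρ₁ ρ₂ : Fin n → ℝ)
    (hz1 : ∀ (i : Fin n) (x x' : Fin n → X), (∀ j, j ≠ i → x j = x' j) →
      ∀ τ : ℝ, 0 ≤ τ →
        ∑ y, M₁ x y * Real.exp (τ * Real.log (M₁ x y / M₁ x' y))
          ≤ Real.exp (τ * (τ + 1) * ρ₁ i))
    (hz2 : ∀ (y₁ : Y₁) (i : Fin n) (x x' : Fin n → X), (∀ j, j ≠ i → x j = x' j) →
      ∀ τ : ℝ, 0 ≤ τ →
        ∑ y₂, M₂ x y₁ y₂ * Real.exp (τ * Real.log (M₂ x y₁ y₂ / M₂ x' y₁ y₂))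
          ≤ Real.exp (τ * (τ + 1) * ρ₂ i)) :
    ∀ (i : Fin n) (x x' : Fin n → X), (∀ j, j ≠ i → x j = x' j) →
      ∀ τ : ℝ, 0 ≤ τ →
        ∑ y : Y₁ × Y₂, (M₁ x y.1 * M₂ x y.1 y.2) *
            Real.exp (τ * Real.log ((M₁ x y.1 * M₂ x y.1 y.2) / (M₁ x' y.1 * M₂ x' y.1 y.2)))
          ≤ Real.exp (τ * (τ + 1) * (ρ₁ i + ρ₂ i)) := by
  intro i x x' hx τ hτ
  have key : ∀ (y₁ : Y₁) (y₂ : Y₂), (M₁ x y₁ * M₂ x y₁ y₂) *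
      Real.exp (τ * Real.log ((M₁ x y₁ * M₂ x y₁ y₂) / (M₁ x' y₁ * M₂ x' y₁ y₂)))
      = (M₁ x y₁ * Real.exp (τ * Real.log (M₁ x y₁ / M₁ x' y₁))) *
        (M₂ x y₁ y₂ * Real.exp (τ * Real.log (M₂ x y₁ y₂ / M₂ x' y₁ y₂))) := by
    intro y₁ y₂
    rw [← div_mul_div_comm,
      Real.log_mul (div_pos (hM₁pos x y₁) (hM₁pos x' y₁)).ne'
        (div_pos (hM₂pos x y₁ y₂) (hM₂pos x' y₁ y₂)).ne',
      mul_add, Real.exp_add]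
    ring
  calc ∑ y : Y₁ × Y₂, (M₁ x y.1 * M₂ x y.1 y.2) *
        Real.exp (τ * Real.log ((M₁ x y.1 * M₂ x y.1 y.2) / (M₁ x' y.1 * M₂ x' y.1 y.2)))
      = ∑ y₁, (M₁ x y₁ * Real.exp (τ * Real.log (M₁ x y₁ / M₁ x' y₁))) *
          ∑ y₂, M₂ x y₁ y₂ * Real.exp (τ * Real.log (M₂ x y₁ y₂ / M₂ x' y₁ y₂)) := by
        rw [Fintype.sum_prod_type]
        exact Finset.sum_congr rfl fun y₁ _ => by
          rw [Finset.mul_sum]; exact Finset.sum_congr rfl fun y₂ _ => key y₁ y₂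
    _ ≤ ∑ y₁, (M₁ x y₁ * Real.exp (τ * Real.log (M₁ x y₁ / M₁ x' y₁))) *
          Real.exp (τ * (τ + 1) * ρ₂ i) := by
        refine Finset.sum_le_sum fun y₁ _ => ?_
        exact mul_le_mul_of_nonneg_left (hz2 y₁ i x x' hx τ hτ)
          (mul_pos (hM₁pos x y₁) (Real.exp_pos _)).le
    _ = (∑ y₁, M₁ x y₁ * Real.exp (τ * Real.log (M₁ x y₁ / M₁ x' y₁))) *
          Real.exp (τ * (τ + 1) * ρ₂ i) := by rw [Finset.sum_mul]
    _ ≤ Real.exp (τ * (τ + 1) * ρ₁ i) * Real.exp (τ * (τ + 1) * ρ₂ i) :=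
        mul_le_mul_of_nonneg_right (hz1 i x x' hx τ hτ) (Real.exp_pos _).le
    _ = Real.exp (τ * (τ + 1) * (ρ₁ i + ρ₂ i)) := by
        rw [← Real.exp_add]; ring_nf
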